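/- Let 0 < α < 1 and let T be a bounded linear operator on a Banach space with sup_n ‖M_n^α(T)‖ < ∞, where M_n^α = S_n^α / A_n^α with S_n^α = ∑_{k=0}^n A_{n-k}^{α-1} T^k and A_n^β = (β+n)(β+n-1)⋯(β+1)/n!. Then ‖T^n‖ = O(n^α). -/
import Mathlib


open Filter Topology

/-- The binomial-type coefficients `A_n^β`: `A_0^β = 1` and
`A_n^β = (β+n)(β+n-1)⋯(β+1)/n! = ∏_{j=1}^n (β+j)/j`. -/
noncomputable def cesaroCoeff (β : ℝ) (n : ℕ) : ℝ :=
  ∏ j ∈ Finset.Icc 1 n, (β + j) / j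

lemma cesaroCoeff_zero (β : ℝ) : cesaroCoeff β 0 = 1 := by
  simp [cesaroCoeff]

lemma cesaroCoeff_one' (β : ℝ) : cesaroCoeff β 1 = β + 1 := by
  simp [cesaroCoeff]

lemma cesaroCoeff_succ (β : ℝ) (n : ℕ) :
    cesaroCoeff β (n + 1) = cesaroCoeff β n * ((β + (n + 1)) / (n + 1)) := by
  unfold cesaroCoeff
  rw [Finset.prod_Icc_succ_top (by omega : 1 ≤ n + 1)]
  push_cast
  ring

lemma cesaroCoeff_pos {β : ℝ} (hβ : -1 < β) (n : ℕ) : 0 < cesaroCoeff β n := by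
  induction n with
  | zero => simp [cesaroCoeff_zero]
  | succ n ih =>
      rw [cesaroCoeff_succ]
      have h1 : (0:ℝ) < β + (n + 1) := by
        have : (0:ℝ) ≤ n := Nat.cast_nonneg n
        linarith
      have h2 : (0:ℝ) < (n:ℝ) + 1 := by positivity
      exact mul_pos ih (div_pos h1 h2)

lemma cesaroCoeff_shift (β : ℝ) (n : ℕ) :
    cesaroCoeff β (n + 1) = (β + 1) / (n + 1) * cesaroCoeff (β + 1) n := by
  induction n with
  | zero => simp [cesaroCoeff_succ, cesaroCoeff_zero]
  | succ n ih =>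
      rw [cesaroCoeff_succ, ih, cesaroCoeff_succ]
      have h1 : ((n:ℝ) + 1) ≠ 0 := by positivity
      have h2 : ((n:ℝ) + 1 + 1) ≠ 0 := by positivity
      push_cast
      field_simp
      ring

lemma cesaroCoeff_pascal (β : ℝ) (n : ℕ) :
    cesaroCoeff (β + 1) (n + 1) = cesaroCoeff (β + 1) n + cesaroCoeff β (n + 1) := by
  rw [cesaroCoeff_succ, cesaroCoeff_shift]
  have h1 : ((n:ℝ) + 1) ≠ 0 := by positivity
  field_simp
  ring

lemma cesaroCoeff_sum (β : ℝ) (n : ℕ) :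
    ∑ j ∈ Finset.range (n + 1), cesaroCoeff β j = cesaroCoeff (β + 1) n := by
  induction n with
  | zero => simp [cesaroCoeff_zero]
  | succ n ih => rw [Finset.sum_range_succ, ih, cesaroCoeff_pascal]

lemma cesaroCoeff_mono {α : ℝ} (hα : 0 < α) : Monotone (cesaroCoeff α) := by
  apply monotone_nat_of_le_succ
  intro n
  rw [cesaroCoeff_succ]
  have hpos := cesaroCoeff_pos (by linarith : (-1:ℝ) < α) n
  have h2 : (0:ℝ) < (n:ℝ) + 1 := by positivity
  have : (1:ℝ) ≤ (α + (n + 1)) / (n + 1) := by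
    rw [le_div_iff₀ h2]; linarith
  nlinarith

lemma cesaroCoeff_neg_nonpos {α : ℝ} (hα0 : 0 < α) (hα1 : α < 1) :
    ∀ n : ℕ, 1 ≤ n → cesaroCoeff (-α - 1) n ≤ 0 := by
  intro n hn
  induction n, hn using Nat.le_induction with
  | base =>
      rw [cesaroCoeff_one']; linarith
  | succ n hn ih =>
      rw [cesaroCoeff_succ]
      have h1 : (0:ℝ) ≤ (-α - 1 + (n + 1)) / (n + 1) := by
        have hn1 : (1:ℝ) ≤ (n:ℝ) := by exact_mod_cast hn
        apply div_nonneg <;> linarith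
      exact mul_nonpos_of_nonpos_of_nonneg ih h1

lemma cesaroCoeff_le_rpow {α : ℝ} (hα : 0 < α) {n : ℕ} (hn : 1 ≤ n) :
    cesaroCoeff α n ≤ Real.exp α * (n:ℝ) ^ α := by
  have hnpos : (0:ℝ) < n := by exact_mod_cast hn
  have h1 : cesaroCoeff α n ≤ Real.exp (∑ j ∈ Finset.Icc 1 n, α * (j:ℝ)⁻¹) := by
    rw [Real.exp_sum]
    apply Finset.prod_le_prod
    · intro j hj
      have hj1 : 1 ≤ j := (Finset.mem_Icc.mp hj).1
      have hjpos : (0:ℝ) < j := by exact_mod_cast hj1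
      positivity
    · intro j hj
      have hj1 : 1 ≤ j := (Finset.mem_Icc.mp hj).1
      have hjpos : (0:ℝ) < j := by exact_mod_cast hj1
      have : (α + j) / j = α * (j:ℝ)⁻¹ + 1 := by field_simp
      rw [this]
      exact Real.add_one_le_exp _
  have h2 : ∑ j ∈ Finset.Icc 1 n, α * (j:ℝ)⁻¹ = α * ((harmonic n : ℚ) : ℝ) := by
    rw [← Finset.mul_sum]
    congr 1
    rw [harmonic_eq_sum_Icc]
    push_cast
    rfl
  have h3 : ((harmonic n : ℚ) : ℝ) ≤ 1 + Real.log n := harmonic_le_one_add_log n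
  calc cesaroCoeff α n ≤ Real.exp (α * ((harmonic n : ℚ) : ℝ)) := by rw [← h2]; exact h1
    _ ≤ Real.exp (α * (1 + Real.log n)) := by
        apply Real.exp_le_exp.mpr
        exact mul_le_mul_of_nonneg_left h3 (le_of_lt hα)
    _ = Real.exp α * (n:ℝ) ^ α := by
        rw [mul_add, Real.exp_add, mul_one]
        congr 1
        rw [Real.rpow_def_of_pos hnpos, mul_comm]

lemma conv_rec (α : ℝ) (n : ℕ) :
    ((n:ℝ) + 1) * (∑ k ∈ Finset.range (n + 2),
        cesaroCoeff (-α - 1) (n + 1 - k) * cesaroCoeff (α - 1) k)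
    = (n:ℝ) * (∑ k ∈ Finset.range (n + 1),
        cesaroCoeff (-α - 1) (n - k) * cesaroCoeff (α - 1) k) := by
  have hv : ∀ m : ℕ, ((m:ℝ) + 1) * cesaroCoeff (-α - 1) (m + 1)
      = ((m:ℝ) - α) * cesaroCoeff (-α - 1) m := by
    intro m
    rw [cesaroCoeff_succ]
    have hm : ((m:ℝ) + 1) ≠ 0 := by positivity
    field_simp
    ring
  have hu : ∀ m : ℕ, ((m:ℝ) + 1) * cesaroCoeff (α - 1) (m + 1)
      = (α + (m:ℝ)) * cesaroCoeff (α - 1) m := by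
    intro m
    rw [cesaroCoeff_succ]
    have hm : ((m:ℝ) + 1) ≠ 0 := by positivity
    field_simp
    ring
  rw [Finset.mul_sum]
  have hsplit : ∀ k ∈ Finset.range (n + 2),
      ((n:ℝ) + 1) * (cesaroCoeff (-α - 1) (n + 1 - k) * cesaroCoeff (α - 1) k)
      = ((n + 1 - k : ℕ):ℝ) * cesaroCoeff (-α - 1) (n + 1 - k) * cesaroCoeff (α - 1) k
        + (k:ℝ) * (cesaroCoeff (-α - 1) (n + 1 - k) * cesaroCoeff (α - 1) k) := by
    intro k hk
    have hk' : k ≤ n + 1 := by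
      have := Finset.mem_range.mp hk; omega
    have : ((n + 1 - k : ℕ):ℝ) = (n:ℝ) + 1 - (k:ℝ) := by
      push_cast [Nat.cast_sub hk']; ring
    rw [this]; ring
  rw [Finset.sum_congr rfl hsplit, Finset.sum_add_distrib]
  have hA : ∑ k ∈ Finset.range (n + 2),
      ((n + 1 - k : ℕ):ℝ) * cesaroCoeff (-α - 1) (n + 1 - k) * cesaroCoeff (α - 1) k
      = ∑ k ∈ Finset.range (n + 1),
        (((n - k : ℕ):ℝ) - α) * (cesaroCoeff (-α - 1) (n - k) * cesaroCoeff (α - 1) k) := by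
    rw [Finset.sum_range_succ]
    simp only [Nat.sub_self, Nat.cast_zero, zero_mul, add_zero]
    apply Finset.sum_congr rfl
    intro k hk
    have hk' : k ≤ n := by have := Finset.mem_range.mp hk; omega
    have h1 : n + 1 - k = (n - k) + 1 := by omega
    rw [h1]
    have := hv (n - k)
    push_cast at this ⊢
    linear_combination cesaroCoeff (α - 1) k * this
  have hB : ∑ k ∈ Finset.range (n + 2),
      (k:ℝ) * (cesaroCoeff (-α - 1) (n + 1 - k) * cesaroCoeff (α - 1) k)
      = ∑ k ∈ Finset.range (n + 1),
        (α + (k:ℝ)) * (cesaroCoeff (-α - 1) (n - k) * cesaroCoeff (α - 1) k) := by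
    rw [Finset.sum_range_succ']
    simp only [Nat.cast_zero, zero_mul, add_zero]
    apply Finset.sum_congr rfl
    intro k hk
    have h1 : n + 1 - (k + 1) = n - k := by omega
    rw [h1]
    have := hu k
    push_cast at this ⊢
    linear_combination cesaroCoeff (-α - 1) (n - k) * this
  rw [hA, hB, ← Finset.sum_add_distrib, Finset.mul_sum]
  apply Finset.sum_congr rfl
  intro k hk
  have hk' : k ≤ n := by have := Finset.mem_range.mp hk; omega
  have : ((n - k : ℕ):ℝ) = (n:ℝ) - (k:ℝ) := by push_cast [Nat.cast_sub hk']; ring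
  rw [this]; ring

lemma conv_eq_zero {α : ℝ} (n : ℕ) (hn : 1 ≤ n) :
    ∑ k ∈ Finset.range (n + 1),
      cesaroCoeff (-α - 1) (n - k) * cesaroCoeff (α - 1) k = 0 := by
  induction n, hn using Nat.le_induction with
  | base =>
      rw [Finset.sum_range_succ, Finset.sum_range_one]
      simp only [Nat.sub_self, Nat.sub_zero]
      simp only [cesaroCoeff_zero, cesaroCoeff_one']
      ring
  | succ n hn ih =>
      have h := conv_rec α n
      rw [ih, mul_zero] at h
      have hn1 : ((n:ℝ) + 1) ≠ 0 := by positivity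
      have := mul_eq_zero.mp h
      tauto

lemma inversion {X : Type*} [NormedAddCommGroup X] [NormedSpace ℝ X]
    (T : X →L[ℝ] X) (α : ℝ) (n : ℕ) :
    ∑ k ∈ Finset.range (n + 1), cesaroCoeff (-α - 1) (n - k) •
      (∑ j ∈ Finset.range (k + 1), cesaroCoeff (α - 1) (k - j) • T ^ j) = T ^ n := by
  have key := Finset.sum_range_diag_flip (n + 1)
    (fun a b => (cesaroCoeff (-α - 1) (n - (a + b)) * cesaroCoeff (α - 1) b) • (T ^ a))
  have hL : ∑ k ∈ Finset.range (n + 1), cesaroCoeff (-α - 1) (n - k) •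
      (∑ j ∈ Finset.range (k + 1), cesaroCoeff (α - 1) (k - j) • T ^ j)
      = ∑ m ∈ Finset.range (n + 1), ∑ k ∈ Finset.range (m + 1),
        (cesaroCoeff (-α - 1) (n - (k + (m - k))) * cesaroCoeff (α - 1) (m - k)) • (T ^ k) := by
    apply Finset.sum_congr rfl
    intro m hm
    rw [Finset.smul_sum]
    apply Finset.sum_congr rfl
    intro k hk
    have hk' : k ≤ m := by have := Finset.mem_range.mp hk; omega
    rw [Nat.add_sub_cancel' hk', smul_smul]
  rw [hL, key]
  have hR : ∀ m ∈ Finset.range (n + 1),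
      ∑ k ∈ Finset.range (n + 1 - m),
        (cesaroCoeff (-α - 1) (n - (m + k)) * cesaroCoeff (α - 1) k) • (T ^ m)
      = (∑ k ∈ Finset.range ((n - m) + 1),
          cesaroCoeff (-α - 1) ((n - m) - k) * cesaroCoeff (α - 1) k) • (T ^ m) := by
    intro m hm
    have hm' : m ≤ n := by have := Finset.mem_range.mp hm; omega
    have h1 : n + 1 - m = (n - m) + 1 := by omega
    rw [h1, Finset.sum_smul]
    apply Finset.sum_congr rfl
    intro k hk
    have : n - (m + k) = (n - m) - k := by omega
    rw [this]
  rw [Finset.sum_congr rfl hR]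
  rw [Finset.sum_eq_single n]
  · simp [cesaroCoeff_zero]
  · intro m hm hmn
    have hm' : m ≤ n := by have := Finset.mem_range.mp hm; omega
    have h1 : 1 ≤ n - m := by omega
    rw [conv_eq_zero (n - m) h1, zero_smul]
  · intro hn
    exact absurd (Finset.self_mem_range_succ n) hn

/-- If `0 < α < 1` and `T` is `(C,α)`-bounded, i.e. the Cesàro means of order `α`,
`M_n^α = (A_n^α)⁻¹ • ∑_{k=0}^n A_{n-k}^{α-1} T^k`, are uniformly bounded in operator norm,
then `‖T^n‖ = O(n^α)`. -/
theorem norm_pow_bigO_of_cesaro_alpha_bounded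
    {X : Type*} [NormedAddCommGroup X] [NormedSpace ℝ X] [CompleteSpace X]
    (T : X →L[ℝ] X) (α : ℝ) (hα0 : 0 < α) (hα1 : α < 1)
    (h : ∃ M : ℝ, ∀ n : ℕ,
      ‖(cesaroCoeff α n)⁻¹ •
        ∑ k ∈ Finset.range (n + 1), cesaroCoeff (α - 1) (n - k) • T ^ k‖ ≤ M) :
    ∃ C : ℝ, ∀ n : ℕ, 1 ≤ n → ‖T ^ n‖ ≤ C * (n : ℝ) ^ α := by
  obtain ⟨M, hM⟩ := h
  have hM0 : 0 ≤ M := le_trans (norm_nonneg _) (hM 0)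
  set S : ℕ → (X →L[ℝ] X) := fun k =>
    ∑ j ∈ Finset.range (k + 1), cesaroCoeff (α - 1) (k - j) • T ^ j with hS
  have hApos : ∀ k, 0 < cesaroCoeff α k := cesaroCoeff_pos (by linarith)
  have hSnorm : ∀ k, ‖S k‖ ≤ M * cesaroCoeff α k := by
    intro k
    have := hM k
    rw [norm_smul (cesaroCoeff α k)⁻¹ (S k), norm_inv, Real.norm_eq_abs,
      abs_of_pos (hApos k)] at this
    have h2 := mul_le_mul_of_nonneg_left this (le_of_lt (hApos k))
    rw [← mul_assoc, mul_inv_cancel₀ (ne_of_gt (hApos k)), one_mul] at h2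
    linarith [h2]
  refine ⟨2 * M * Real.exp α, ?_⟩
  intro n hn
  have hinv := inversion T α n
  have hbound : ‖T ^ n‖ ≤ ∑ k ∈ Finset.range (n + 1),
      |cesaroCoeff (-α - 1) (n - k)| * (M * cesaroCoeff α n) := by
    rw [← hinv]
    calc ‖∑ k ∈ Finset.range (n + 1), cesaroCoeff (-α - 1) (n - k) • S k‖
        ≤ ∑ k ∈ Finset.range (n + 1), ‖cesaroCoeff (-α - 1) (n - k) • S k‖ :=
          norm_sum_le _ _
      _ ≤ ∑ k ∈ Finset.range (n + 1),
          |cesaroCoeff (-α - 1) (n - k)| * (M * cesaroCoeff α n) := by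
          apply Finset.sum_le_sum
          intro k hk
          rw [norm_smul (cesaroCoeff (-α - 1) (n - k)) (S k), Real.norm_eq_abs]
          apply mul_le_mul_of_nonneg_left _ (abs_nonneg _)
          refine le_trans (hSnorm k) ?_
          have hmono : cesaroCoeff α k ≤ cesaroCoeff α n :=
            cesaroCoeff_mono hα0 (by have := Finset.mem_range.mp hk; omega)
          exact mul_le_mul_of_nonneg_left hmono hM0
  have habs : ∑ k ∈ Finset.range (n + 1), |cesaroCoeff (-α - 1) (n - k)| ≤ 2 := by
    have hrefl : ∑ k ∈ Finset.range (n + 1), |cesaroCoeff (-α - 1) (n - k)|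
        = ∑ j ∈ Finset.range (n + 1), |cesaroCoeff (-α - 1) j| := by
      rw [← Finset.sum_range_reflect]
      apply Finset.sum_congr rfl
      intro k hk
      have := Finset.mem_range.mp hk
      congr 2
      omega
    have heach : ∀ j ∈ Finset.range (n + 1), |cesaroCoeff (-α - 1) j|
        = (if j = 0 then 2 else 0) - cesaroCoeff (-α - 1) j := by
      intro j _
      rcases Nat.eq_zero_or_pos j with hj | hj
      · subst hj; rw [cesaroCoeff_zero]; norm_num
      · have := cesaroCoeff_neg_nonpos hα0 hα1 j hj
        rw [abs_of_nonpos this, if_neg (by omega)]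
        ring
    rw [hrefl, Finset.sum_congr rfl heach, Finset.sum_sub_distrib, cesaroCoeff_sum]
    rw [Finset.sum_ite_eq' (Finset.range (n + 1)) 0 (fun _ => (2:ℝ))]
    rw [if_pos (Finset.mem_range.mpr (by omega))]
    have : (0:ℝ) < cesaroCoeff (-α - 1 + 1) n := cesaroCoeff_pos (by linarith) n
    linarith
  have hsum : ∑ k ∈ Finset.range (n + 1),
      |cesaroCoeff (-α - 1) (n - k)| * (M * cesaroCoeff α n)
      ≤ 2 * (M * cesaroCoeff α n) := by
    rw [← Finset.sum_mul]
    apply mul_le_mul_of_nonneg_right habs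
    exact mul_nonneg hM0 (le_of_lt (hApos n))
  have hA := cesaroCoeff_le_rpow hα0 hn
  have hrppos : (0:ℝ) ≤ (n:ℝ) ^ α := Real.rpow_nonneg (Nat.cast_nonneg n) α
  calc ‖T ^ n‖ ≤ 2 * (M * cesaroCoeff α n) := le_trans hbound hsum
    _ ≤ 2 * (M * (Real.exp α * (n:ℝ) ^ α)) := by
        apply mul_le_mul_of_nonneg_left _ (by norm_num)
        exact mul_le_mul_of_nonneg_left hA hM0
    _ = 2 * M * Real.exp α * (n:ℝ) ^ α := by ring
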